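/- For every n ≥ 3, any set of pairwise non-crossing diagonals of the convex n-gon has at most n − 3 elements. -/

import Mathlib

/-- `x` lies strictly inside the open clockwise arc from `a` to `b` on the convex
`n`-gon whose vertices are `Fin n` in clockwise cyclic order. -/
def InArc (n : ℕ) (a b x : Fin n) : Prop :=
  0 < (x - a).val ∧ (x - a).val < (b - a).val

/-- Two chords of the convex `n`-gon cross: their four endpoints are distinct and
interleave in the cyclic order, i.e. one endpoint of the second chord lies strictly
inside each of the two open arcs determined by the first chord. -/
def Cross (n : ℕ) (e f : Sym2 (Fin n)) : Prop :=
  ∃ a b c d : Fin n, e = s(a, b) ∧ f = s(c, d) ∧ InArc n a b c ∧ InArc n b a d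

/-- A boundary edge of the convex `n`-gon: a chord of the form `{i, i+1 (mod n)}`. -/
def IsBoundaryEdge (n : ℕ) (e : Sym2 (Fin n)) : Prop :=
  ∃ i j : Fin n, e = s(i, j) ∧ (j - i).val = 1

/-- A diagonal of the convex `n`-gon: a chord (pair of distinct vertices) that is not
a boundary edge. -/
def IsDiagonal (n : ℕ) (e : Sym2 (Fin n)) : Prop :=
  ¬ e.IsDiag ∧ ¬ IsBoundaryEdge n e

/-- For every `n ≥ 3`, any set of pairwise non-crossing diagonals of the
convex `n`-gon has at most `n - 3` elements. -/


private lemma fin_sub_val {n : ℕ} (x y : Fin n) :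
    (x - y).val = if y.val ≤ x.val then x.val - y.val else x.val + n - y.val := by
  have hx := x.isLt
  have hy := y.isLt
  rw [Fin.sub_def]
  show (n - y.val + x.val) % n = _
  split_ifs with h
  · rw [show n - y.val + x.val = (x.val - y.val) + n by omega, Nat.add_mod_right,
      Nat.mod_eq_of_lt (by omega)]
  · rw [Nat.mod_eq_of_lt (by omega)]
    omega

private def sig (a b x : ℕ) : ℕ := if x ≤ a then x else x - (b - a - 1)

private lemma sig_lt_iff {a b x y : ℕ} (hab : a + 2 ≤ b)
    (hx : x ≤ a ∨ b ≤ x) (hy : y ≤ a ∨ b ≤ y) :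
    (sig a b x < sig a b y ↔ x < y) := by
  unfold sig
  split_ifs <;> omega

private lemma sig_eq_iff {a b x y : ℕ} (hab : a + 2 ≤ b)
    (hx : x ≤ a ∨ b ≤ x) (hy : y ≤ a ∨ b ≤ y) :
    (sig a b x = sig a b y ↔ x = y) := by
  unfold sig
  split_ifs <;> omega

/-- Key combinatorial lemma: a family of pairwise non-crossing intervals on `{0,…,m}`,
each of length at least 2 and not equal to the full interval, has at most `m - 2`
members. -/
private lemma interval_key : ∀ (k : ℕ) (F : Finset (ℕ × ℕ)) (m : ℕ),
    F.card = k →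
    (∀ pq ∈ F, pq.1 + 2 ≤ pq.2 ∧ pq.2 ≤ m ∧ ¬(pq.1 = 0 ∧ pq.2 = m)) →
    (∀ pq ∈ F, ∀ rs ∈ F, ¬(pq.1 < rs.1 ∧ rs.1 < pq.2 ∧ pq.2 < rs.2)) →
    F.card ≤ m - 2 := by
  intro k
  induction k using Nat.strong_induction_on with
  | _ k ih =>
    intro F m hk hgood hnc
    rcases F.eq_empty_or_nonempty with rfl | hne
    · simp
    obtain ⟨⟨a, b⟩, hab, hmin⟩ := F.exists_min_image (fun pq => pq.2 - pq.1) hne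
    obtain ⟨hab2, hbm, habne⟩ := hgood _ hab
    simp only at hab2 hbm habne
    -- endpoints of other intervals avoid the open interval (a, b)
    have hep : ∀ r s : ℕ, (r, s) ∈ F → (r ≤ a ∨ b ≤ r) ∧ (s ≤ a ∨ b ≤ s) := by
      intro r s hrs
      have hrs2 : r + 2 ≤ s := (hgood _ hrs).1
      have hminrs : b - a ≤ s - r := hmin _ hrs
      constructor
      · by_contra hcon
        push_neg at hcon
        by_cases hbs : b < s
        · exact hnc (a, b) hab (r, s) hrs ⟨by omega, by omega, hbs⟩
        · omega
      · by_contra hcon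
        push_neg at hcon
        by_cases hra : r < a
        · exact hnc (r, s) hrs (a, b) hab ⟨hra, by omega, by omega⟩
        · omega
    set m' := m - (b - a - 1) with hm'
    set F' := F.erase (a, b) with hF'
    set G := F'.image (fun pq => (sig a b pq.1, sig a b pq.2)) with hG
    have hF'sub : ∀ pq ∈ F', pq ∈ F := fun pq h => Finset.mem_of_mem_erase h
    have hGcard : G.card = F'.card := by
      apply Finset.card_image_of_injOn
      intro pq hpq rs hrs h
      have h1 := hep pq.1 pq.2 (hF'sub _ hpq)
      have h2 := hep rs.1 rs.2 (hF'sub _ hrs)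
      have e1 : sig a b pq.1 = sig a b rs.1 := congrArg Prod.fst h
      have e2 : sig a b pq.2 = sig a b rs.2 := congrArg Prod.snd h
      have := (sig_eq_iff hab2 h1.1 h2.1).mp e1
      have := (sig_eq_iff hab2 h1.2 h2.2).mp e2
      exact Prod.ext ‹_› ‹_›
    have hGmem : ∀ pq ∈ G, ∃ r s, (r, s) ∈ F' ∧ pq = (sig a b r, sig a b s) := by
      intro pq hpq
      obtain ⟨rs, hrs, hrfl⟩ := Finset.mem_image.mp hpq
      exact ⟨rs.1, rs.2, hrs, hrfl.symm⟩
    have hGgood : ∀ pq ∈ G, pq.1 + 2 ≤ pq.2 ∧ pq.2 ≤ m' ∧ ¬(pq.1 = 0 ∧ pq.2 = m') := by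
      intro pq hpq
      obtain ⟨r, s, hrs, rfl⟩ := hGmem pq hpq
      have hrsF := hF'sub _ hrs
      obtain ⟨hg1, hg2, hg3⟩ := hgood _ hrsF
      simp only at hg1 hg2 hg3
      have hepr := hep r s hrsF
      have hneq : ¬(r = a ∧ s = b) := by
        intro ⟨h1, h2⟩
        subst h1; subst h2
        exact (Finset.notMem_erase _ _) hrs
      simp only [hm']
      unfold sig
      split_ifs <;> refine ⟨by omega, by omega, by omega⟩
    have hGnc : ∀ pq ∈ G, ∀ rs ∈ G, ¬(pq.1 < rs.1 ∧ rs.1 < pq.2 ∧ pq.2 < rs.2) := by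
      intro pq hpq rs hrs hcon
      obtain ⟨p, q, hpqF, rfl⟩ := hGmem pq hpq
      obtain ⟨r, s, hrsF, rfl⟩ := hGmem rs hrs
      have h1 := hep p q (hF'sub _ hpqF)
      have h2 := hep r s (hF'sub _ hrsF)
      simp only at hcon
      refine hnc (p, q) (hF'sub _ hpqF) (r, s) (hF'sub _ hrsF) ⟨?_, ?_, ?_⟩
      · exact (sig_lt_iff hab2 h1.1 h2.1).mp hcon.1
      · exact (sig_lt_iff hab2 h2.1 h1.2).mp hcon.2.1
      · exact (sig_lt_iff hab2 h1.2 h2.2).mp hcon.2.2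
    have hcard' : F'.card = F.card - 1 := Finset.card_erase_of_mem hab
    have hlt : G.card < k := by
      have : 1 ≤ F.card := Finset.card_pos.mpr hne
      omega
    have hGle : G.card ≤ m' - 2 := ih G.card hlt G m' rfl hGgood hGnc
    omega

private lemma sym2_rep {α : Type*} (z : Sym2 α) : ∃ a b : α, z = s(a, b) :=
  z.ind (fun a b => ⟨a, b, rfl⟩)

private lemma sym2_rep_le {n : ℕ} (z : Sym2 (Fin n)) :
    ∃ a b : Fin n, z = s(a, b) ∧ a.val ≤ b.val := by
  obtain ⟨a, b, rfl⟩ := sym2_rep z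
  rcases le_total a.val b.val with h | h
  · exact ⟨a, b, rfl, h⟩
  · exact ⟨b, a, Sym2.eq_swap, h⟩

theorem stmt_7 (n : ℕ) (hn : 3 ≤ n) (D : Finset (Sym2 (Fin n)))
    (hdiag : ∀ e ∈ D, IsDiagonal n e)
    (hcross : ∀ e ∈ D, ∀ f ∈ D, ¬ Cross n e f) :
    D.card ≤ n - 3 := by
  classical
  set Φ : Sym2 (Fin n) → ℕ × ℕ :=
    Sym2.lift ⟨fun a b => (min a.val b.val, max a.val b.val),
      fun a b => by simp [min_comm, max_comm]⟩ with hΦ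
  have hΦval : ∀ (a b : Fin n), a.val ≤ b.val → Φ s(a, b) = (a.val, b.val) := by
    intro a b h
    simp [hΦ, Sym2.lift_mk, min_eq_left h, max_eq_right h]
  set F := D.image Φ with hF
  have hinj : Set.InjOn Φ D := by
    intro e he f hf h
    obtain ⟨a, b, rfl⟩ := sym2_rep e
    obtain ⟨c, d, rfl⟩ := sym2_rep f
    simp only [hΦ, Sym2.lift_mk, Prod.mk.injEq] at h
    have : (a.val = c.val ∧ b.val = d.val) ∨ (a.val = d.val ∧ b.val = c.val) := by omega
    rcases this with ⟨h1, h2⟩ | ⟨h1, h2⟩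
    · rw [Sym2.eq_iff]; left; exact ⟨Fin.ext h1, Fin.ext h2⟩
    · rw [Sym2.eq_iff]; right; exact ⟨Fin.ext h1, Fin.ext h2⟩
  have hcardeq : F.card = D.card := Finset.card_image_of_injOn hinj
  have hgood : ∀ pq ∈ F, pq.1 + 2 ≤ pq.2 ∧ pq.2 ≤ n - 1 ∧ ¬(pq.1 = 0 ∧ pq.2 = n - 1) := by
    intro pq hpq
    obtain ⟨e, he, rfl⟩ := Finset.mem_image.mp hpq
    obtain ⟨a, b, rfl, hle⟩ := sym2_rep_le e
    obtain ⟨hnd, hnb⟩ := hdiag _ he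
    have hA := a.isLt
    have hB := b.isLt
    have hne : a.val ≠ b.val := by
      intro h
      exact hnd (by rw [Fin.ext h]; exact Sym2.isDiag_iff_proj_eq |>.mpr rfl)
    have h1 : (b - a).val ≠ 1 := fun h => hnb ⟨a, b, rfl, h⟩
    have h2 : (a - b).val ≠ 1 := fun h => hnb ⟨b, a, Sym2.eq_swap, h⟩
    rw [fin_sub_val] at h1 h2
    rw [hΦval a b hle]
    simp only
    split_ifs at h1 h2 <;> omega
  have hnc : ∀ pq ∈ F, ∀ rs ∈ F, ¬(pq.1 < rs.1 ∧ rs.1 < pq.2 ∧ pq.2 < rs.2) := by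
    intro pq hpq rs hrs hcon
    obtain ⟨e, he, hΦe⟩ := Finset.mem_image.mp hpq
    obtain ⟨f, hf, hΦf⟩ := Finset.mem_image.mp hrs
    obtain ⟨a, b, rfl, hle1⟩ := sym2_rep_le e
    obtain ⟨c, d, rfl, hle2⟩ := sym2_rep_le f
    rw [hΦval a b hle1] at hΦe
    rw [hΦval c d hle2] at hΦf
    rw [← hΦe, ← hΦf] at hcon
    simp only at hcon
    obtain ⟨hc1, hc2, hc3⟩ := hcon
    have hA := a.isLt
    have hB := b.isLt
    have hC := c.isLt
    have hD := d.isLt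
    refine hcross _ he _ hf ⟨a, b, c, d, rfl, rfl, ⟨?_, ?_⟩, ⟨?_, ?_⟩⟩
    · rw [fin_sub_val]; split_ifs <;> omega
    · rw [fin_sub_val, fin_sub_val]; split_ifs <;> omega
    · rw [fin_sub_val]; split_ifs <;> omega
    · rw [fin_sub_val, fin_sub_val]; split_ifs <;> omega
  have := interval_key F.card F (n - 1) rfl hgood hnc
  omega
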